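/- Let e > 0 be real and define sequences (a_ℓ), (b_ℓ) by b₀ = e - 6, a₀ = 2e + 6, b_{ℓ+1} = -b_ℓ²/a_ℓ, a_{ℓ+1} = 2a_ℓ + b_{ℓ+1}, and set c_{ℓ,C}² = 36(a_ℓ + b_ℓ)/((a_ℓ² - 36)(a_ℓ - b_ℓ)). Then the sequence (c_{ℓ,C}²) is strictly decreasing: c_{ℓ+1,C}² < c_{ℓ,C}² for every ℓ ≥ 0. -/

import Mathlib

private lemma Qpos (a b : ℝ) (h6 : 6 < a) (hb1 : -a < b) (hb2 : 2*b < a)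
    (h3 : 108 ≤ a^2 + 2*b^2) (h4 : -108 ≤ a^2 + 4*a*b) :
    (a-b)^2 * (a^2 - 36) < (2*a^2 - b^2)^2 - 36*a^2 := by
  have hs : 0 < a + b := by linarith
  rcases le_or_gt b 0 with hb' | hb'
  · have h1 : 0 ≤ (a^2 + 4*a*b + 108) * ((-b) * (2*a - b)) := by
      apply mul_nonneg (by linarith)
      exact mul_nonneg (by linarith) (by linarith)
    have h2 : 0 < (a+b)^2 * ((b - 5/3*a)^2 + 2/9*a^2) := by
      have ha2 : 0 < a^2 := by nlinarith
      have := sq_nonneg (b - 5/3*a)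
      apply mul_pos (by positivity) (by nlinarith)
    nlinarith [h1, h2]
  · have h1 : 0 ≤ (a^2 + 2*b^2 - 108) * (b * (2*a - b)) := by
      apply mul_nonneg (by linarith)
      exact mul_nonneg (by linarith) (by linarith)
    have h2 : 0 < (a+b)^2 * ((9*a - 5*b) * (a - b)) := by
      apply mul_pos (by positivity)
      exact mul_pos (by linarith) (by linarith)
    nlinarith [h1, h2]

private lemma inv_step (a b : ℝ) (h6 : 6 < a) (hb1 : -a < b) (hb2 : 2*b < a)
    (h3 : 108 ≤ a^2 + 2*b^2) (h4 : -108 ≤ a^2 + 4*a*b) :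
    6 < (2*a^2 - b^2)/a ∧ -((2*a^2 - b^2)/a) < -(b^2)/a ∧
    2*(-(b^2)/a) < (2*a^2 - b^2)/a ∧
    108 ≤ ((2*a^2 - b^2)/a)^2 + 2*(-(b^2)/a)^2 ∧
    -108 ≤ ((2*a^2 - b^2)/a)^2 + 4*((2*a^2 - b^2)/a)*(-(b^2)/a) := by
  have ha0 : 0 < a := by linarith
  have hba : b < a := by linarith
  have hb2a : b^2 < a^2 := by nlinarith
  have ha2 : 0 < a^2 := by positivity
  have ha2' : (a:ℝ)^2 ≠ 0 := ne_of_gt ha2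
  refine ⟨?_, ?_, ?_, ?_, ?_⟩
  · rw [lt_div_iff₀ ha0]; nlinarith
  · have : -((2*a^2 - b^2)/a) = (-(2*a^2 - b^2))/a := by ring
    rw [this, div_lt_div_iff₀ ha0 ha0]; nlinarith
  · have : 2*(-(b^2)/a) = (-(2*b^2))/a := by ring
    rw [this, div_lt_div_iff₀ ha0 ha0]; nlinarith
  · have h : ((2*a^2 - b^2)/a)^2 + 2*(-(b^2)/a)^2
        = ((2*a^2 - b^2)^2 + 2*b^4)/a^2 := by
      field_simp
    rw [h, le_div_iff₀ ha2]
    nlinarith [sq_nonneg (a^2 - b^2), mul_le_mul_of_nonneg_right h3 ha2.le]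
  · have h : ((2*a^2 - b^2)/a)^2 + 4*((2*a^2 - b^2)/a)*(-(b^2)/a)
        = ((2*a^2 - b^2)*(2*a^2 - 5*b^2))/a^2 := by
      field_simp; ring
    rw [h, le_div_iff₀ ha2]
    rcases le_or_gt (4*b^2) (a^2) with hc | hc
    · nlinarith [sq_nonneg b, sq_nonneg (b^2), mul_nonneg (mul_nonneg ha2.le ha2.le) (sub_nonneg.2 hc)]
    · have hbneg : b < 0 := by nlinarith
      nlinarith [mul_nonneg (by linarith : (0:ℝ) ≤ a^2 + 4*a*b + 108) (by linarith : (0:ℝ) ≤ 4*b^2 - a^2),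
        mul_nonneg (by linarith : (0:ℝ) ≤ a^2 + 2*b^2 - 108) (by linarith : (0:ℝ) ≤ 4*b^2 - a^2),
        mul_nonneg (by linarith : (0:ℝ) ≤ a^2 + 4*a*b + 108) (by linarith : (0:ℝ) ≤ a^2 + 2*b^2 - 108),
        sq_nonneg (a^2 + 2*a*b), sq_nonneg (a + 2*b), sq_nonneg (a*b + 108),
        mul_nonneg (by linarith : (0:ℝ) ≤ a^2 + 4*a*b + 108) (sq_nonneg (a + 2*b)),
        mul_pos ha0 (by linarith : (0:ℝ) < -b)]

set_option maxHeartbeats 1600000 in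
theorem cC_strict_decreasing (e : ℝ) (he : 0 < e) (a b c : ℕ → ℝ)
    (hb0 : b 0 = e - 6) (ha0 : a 0 = 2*e + 6)
    (hb : ∀ ℓ, b (ℓ+1) = -((b ℓ)^2) / a ℓ)
    (ha : ∀ ℓ, a (ℓ+1) = 2 * a ℓ + b (ℓ+1))
    (hc : ∀ ℓ, c ℓ = 36 * (a ℓ + b ℓ) / (((a ℓ)^2 - 36) * (a ℓ - b ℓ))) :
    ∀ ℓ, c (ℓ+1) < c ℓ := by
  have key : ∀ ℓ, 6 < a ℓ ∧ -(a ℓ) < b ℓ ∧ 2*(b ℓ) < a ℓ ∧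
      108 ≤ (a ℓ)^2 + 2*(b ℓ)^2 ∧ -108 ≤ (a ℓ)^2 + 4*(a ℓ)*(b ℓ) := by
    intro ℓ
    induction ℓ with
    | zero =>
      rw [ha0, hb0]
      refine ⟨by linarith, by linarith, by linarith, by nlinarith, by nlinarith⟩
    | succ n ih =>
      obtain ⟨h6, hb1, hb2, h3, h4⟩ := ih
      have ha0' : 0 < a n := by linarith
      have hA : a (n+1) = (2*(a n)^2 - (b n)^2)/(a n) := by
        rw [ha n, hb n]; field_simp; ring
      have hB : b (n+1) = -((b n)^2)/(a n) := hb n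
      rw [hA, hB]
      exact inv_step (a n) (b n) h6 hb1 hb2 h3 h4
  intro ℓ
  obtain ⟨h6, hb1, hb2, h3, h4⟩ := key ℓ
  obtain ⟨h6', hb1', hb2', _, _⟩ := key (ℓ+1)
  set A := a ℓ with hAdef
  set B := b ℓ with hBdef
  have ha0' : 0 < A := by linarith
  have hane : A ≠ 0 := ne_of_gt ha0'
  have hA : a (ℓ+1) = (2*A^2 - B^2)/A := by
    rw [ha ℓ, hb ℓ, ← hAdef, ← hBdef]; field_simp; ring
  have hB : b (ℓ+1) = -(B^2)/A := hb ℓ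
  -- denominator positivity
  have hD : 0 < (A^2 - 36) * (A - B) := by
    apply mul_pos (by nlinarith) (by linarith)
  have hD' : 0 < (2*A^2 - B^2)^2 - 36*A^2 := by
    have hb2a : B^2 < A^2 := by nlinarith
    nlinarith [sq_nonneg (A^2 - B^2)]
  have hc1 : c (ℓ+1) = 36*(A^2 - B^2)/((2*A^2 - B^2)^2 - 36*A^2) := by
    rw [hc (ℓ+1), hA, hB]
    rw [div_eq_div_iff (by
        apply mul_ne_zero
        · intro h
          apply ne_of_gt hD'
          have : ((2*A^2 - B^2)/A)^2 = 36 := by linarith [sub_eq_zero.mp h]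
          field_simp at this
          nlinarith [this]
        · intro h
          have : (2*A^2 - B^2)/A - -(B^2)/A = 2*A := by field_simp; ring
          rw [this] at h
          linarith) (ne_of_gt hD')]
    field_simp
    ring
  have hc0 : c ℓ = 36*(A + B)/((A^2 - 36)*(A - B)) := hc ℓ
  rw [hc1, hc0, div_lt_div_iff₀ hD' hD]
  have hQ := Qpos A B h6 hb1 hb2 h3 h4
  have hs : (0:ℝ) < 36*(A + B) := by linarith
  nlinarith [mul_lt_mul_of_pos_left hQ hs]
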